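/- Let b, c be real numbers with c − b > 0 and c + 2b > 0. Then c > 0 and 2/(c − b) + 1/(c + 2b) ≥ 3/c, with equality if and only if b = 0. -/

import Mathlib

/-- If `c - b > 0` and `c + 2b > 0`, then `c > 0` and
`2/(c-b) + 1/(c+2b) ≥ 3/c`, with equality iff `b = 0`. -/
theorem trace_inv_circulant3_ge (b c : ℝ) (h1 : 0 < c - b) (h2 : 0 < c + 2 * b) :
    0 < c ∧ 2 / (c - b) + 1 / (c + 2 * b) ≥ 3 / c ∧
      (2 / (c - b) + 1 / (c + 2 * b) = 3 / c ↔ b = 0) := by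
  have hc : 0 < c := by nlinarith
  have key : 2 / (c - b) + 1 / (c + 2 * b) - 3 / c
      = 6 * b ^ 2 / (c * (c - b) * (c + 2 * b)) := by
    field_simp
    ring
  have hden : 0 < c * (c - b) * (c + 2 * b) := by positivity
  refine ⟨hc, ?_, ?_⟩
  · have : 0 ≤ 6 * b ^ 2 / (c * (c - b) * (c + 2 * b)) := by positivity
    linarith [key]
  · constructor
    · intro h
      have h0 : 6 * b ^ 2 / (c * (c - b) * (c + 2 * b)) = 0 := by linarith [key]
      have : 6 * b ^ 2 = 0 := by
        field_simp at h0
        rw [mul_zero, div_eq_iff (ne_of_gt (by linarith)), zero_mul] at h0; exact h0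
      nlinarith [sq_nonneg b]
    · intro h; subst h; field_simp; ring
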